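/- For every dimension d ≥ 1 and every r > 0 there exists a constant M > 0 (depending only on d and r) such that for every nonempty compact connected set Σ ⊆ ℝ^d, the Lebesgue measure of the closed r-neighborhood C_{Σ,r} = { x : dist(x, Σ) ≤ r } satisfies vol(C_{Σ,r}) ≤ M·(1 + ℋ¹(Σ)), where ℋ¹ denotes the 1-dimensional Hausdorff measure (the inequality being read in [0,∞]). -/

import Mathlib

open MeasureTheory Metric Set
open scoped ENNReal

/-- If a connected set `S` contains `x` and is not contained in `closedBall x s`, then the
one-dimensional Hausdorff measure of `S ∩ closedBall x s` is at least `s`. -/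
lemma aux_hausdorff_ge {E : Type*} [MetricSpace E] [MeasurableSpace E] [BorelSpace E]
    {S : Set E} (hconn : IsConnected S) {x : E} (hx : x ∈ S) {s : ℝ} (hs : 0 ≤ s)
    (h : ¬ S ⊆ closedBall x s) :
    ENNReal.ofReal s ≤ μH[1] (S ∩ closedBall x s) := by
  obtain ⟨y, hyS, hy⟩ := not_subset.mp h
  set f : E → ℝ := fun z => dist z x with hf
  have hlip : LipschitzWith 1 f := LipschitzWith.dist_left x
  have hconn' : IsPreconnected (f '' S) :=
    (hconn.image f hlip.continuous.continuousOn).isPreconnected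
  have h0 : (0 : ℝ) ∈ f '' S := ⟨x, hx, dist_self x⟩
  have hyd : f y ∈ f '' S := mem_image_of_mem f hyS
  have hys : s < dist y x := by simpa [mem_closedBall] using hy
  have hIcc : Icc (0 : ℝ) (dist y x) ⊆ f '' S := hconn'.Icc_subset h0 hyd
  have hsub : Icc (0 : ℝ) s ⊆ f '' (S ∩ closedBall x s) := by
    intro t ht
    obtain ⟨z, hz, hzt⟩ := hIcc ⟨ht.1, ht.2.trans hys.le⟩
    exact ⟨z, ⟨hz, mem_closedBall.mpr ((le_of_eq hzt).trans ht.2)⟩, hzt⟩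
  calc ENNReal.ofReal s = μH[1] (Icc (0 : ℝ) s) := by
        rw [hausdorffMeasure_real, Real.volume_Icc]; simp
    _ ≤ μH[1] (f '' (S ∩ closedBall x s)) := measure_mono hsub
    _ ≤ μH[1] (S ∩ closedBall x s) := by
        simpa using hlip.hausdorffMeasure_image_le zero_le_one (S ∩ closedBall x s)

/-- Every finite set in a metric space has a maximal `r`-separated subset, which is then
an `r`-net for the original set. -/
lemma aux_exists_separated_net {E : Type*} [MetricSpace E] {r : ℝ} (hr : 0 < r)
    (T0 : Set E) (hT0 : T0.Finite) :
    ∃ T ⊆ T0, T.Finite ∧ (T.Pairwise fun a b => r ≤ dist a b) ∧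
      ∀ t ∈ T0, ∃ u ∈ T, dist t u < r := by
  set P : Set (Set E) := {T | T ⊆ T0 ∧ T.Pairwise fun a b => r ≤ dist a b} with hP
  have hPfin : P.Finite := hT0.finite_subsets.subset fun T hT => hT.1
  have hPne : P.Nonempty := ⟨∅, empty_subset _, Set.pairwise_empty _⟩
  obtain ⟨T, hTP, hTmax⟩ := Set.Finite.exists_maximalFor id P hPfin hPne
  refine ⟨T, hTP.1, hT0.subset hTP.1, hTP.2, fun t ht => ?_⟩
  by_cases hmem : ∃ u ∈ T, dist t u < r
  · exact hmem
  push_neg at hmem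
  have htT : t ∈ T := by
    have hsym : Symmetric fun a b : E => r ≤ dist a b := fun a b hab => by
      show r ≤ dist b a; rwa [dist_comm]
    have hins : insert t T ∈ P := by
      refine ⟨insert_subset ht hTP.1, (haveI : Std.Symm (fun a b : E => r ≤ dist a b) := ⟨fun a b h => hsym h⟩; Set.pairwise_insert_of_symm).2
        ⟨hTP.2, fun u hu _ => hmem u hu⟩⟩
    have := hTmax hins (subset_insert t T)
    simp only [id] at this
    exact this (mem_insert t T)
  exact ⟨t, htT, by simpa using hr⟩

/-- For every `d ≥ 1` and `r > 0` there is a constant `M > 0` such that for every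
nonempty compact connected `Σ ⊆ ℝ^d`, the volume of the closed `r`-neighborhood of `Σ`
is at most `M·(1 + ℋ¹(Σ))`. -/
theorem volume_neighborhood_le_length (d : ℕ) (hd : 1 ≤ d) (r : ℝ) (hr : 0 < r) :
    ∃ M : ℝ, 0 < M ∧
      ∀ S : Set (EuclideanSpace ℝ (Fin d)), S.Nonempty → IsCompact S → IsConnected S →
        volume {x : EuclideanSpace ℝ (Fin d) | Metric.infDist x S ≤ r} ≤
          ENNReal.ofReal M * (1 + μH[1] S) := by
  set E := EuclideanSpace ℝ (Fin d)
  set V : ℝ≥0∞ := volume (closedBall (0 : E) (3 * r)) with hV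
  have hVfin : V < ⊤ := measure_closedBall_lt_top
  refine ⟨(V.toReal + 1) * max 1 (3 / r), by positivity, ?_⟩
  intro S hne hcomp hconn
  -- finite cover of S by balls of radius r/2 centered in S
  obtain ⟨T0, hT0S, hT0fin, hT0cov⟩ := hcomp.finite_cover_balls (half_pos hr)
  -- maximal r-separated subset
  obtain ⟨T, hTT0, hTfin, hTsep, hTnet⟩ := aux_exists_separated_net hr T0 hT0fin
  have hTS : T ⊆ S := hTT0.trans hT0S
  -- the neighborhood is contained in the union of balls of radius 3r around T
  have hnbhd : {x : E | Metric.infDist x S ≤ r} ⊆ ⋃ u ∈ hTfin.toFinset, closedBall u (3 * r) := by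
    intro x hx
    obtain ⟨y, hyS, hyd⟩ := hcomp.exists_infDist_eq_dist hne x
    obtain ⟨t, ht0, hyt⟩ := by simpa using hT0cov hyS
    obtain ⟨u, huT, htu⟩ := hTnet t ht0
    have hxy : dist x y ≤ r := hyd ▸ hx
    have : dist x u ≤ 3 * r := by
      calc dist x u ≤ dist x y + dist y t + dist t u := dist_triangle4 x y t u
        _ ≤ r + r / 2 + r := by
            have := mem_ball.mp hyt
            nlinarith
        _ ≤ 3 * r := by linarith
    simp only [Set.mem_iUnion]
    exact ⟨u, hTfin.mem_toFinset.mpr huT, this⟩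
  -- volume bound via covering
  set N := hTfin.toFinset.card with hN
  have hvol : volume {x : E | Metric.infDist x S ≤ r} ≤ (N : ℝ≥0∞) * V := by
    calc volume {x : E | Metric.infDist x S ≤ r}
        ≤ ∑ u ∈ hTfin.toFinset, volume (closedBall u (3 * r)) :=
          (measure_mono hnbhd).trans (measure_biUnion_finset_le _ _)
      _ = ∑ _u ∈ hTfin.toFinset, V := by
          refine Finset.sum_congr rfl fun u _ => ?_
          rw [hV, Measure.addHaar_closedBall_center]
      _ = (N : ℝ≥0∞) * V := by rw [Finset.sum_const, nsmul_eq_mul]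
  -- cardinality bound
  have hcard : (N : ℝ≥0∞) ≤ 1 + ENNReal.ofReal (3 / r) * μH[1] S := by
    rcases le_or_gt N 1 with hN1 | hN1
    · calc (N : ℝ≥0∞) ≤ 1 := by exact_mod_cast hN1
        _ ≤ _ := le_self_add
    · -- N ≥ 2 : each point of T gives Hausdorff mass r/3 in a disjoint ball
      have hkey : ∀ u ∈ hTfin.toFinset,
          ENNReal.ofReal (r / 3) ≤ μH[1] (S ∩ closedBall u (r / 3)) := by
        intro u hu
        have huT : u ∈ T := hTfin.mem_toFinset.mp hu
        obtain ⟨v, hv, hvu⟩ : ∃ v ∈ hTfin.toFinset, v ≠ u := by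
          have : 1 < hTfin.toFinset.card := hN1
          obtain ⟨a, ha, b, hb, hab⟩ := Finset.one_lt_card.mp this
          rcases eq_or_ne a u with rfl | h
          · exact ⟨b, hb, fun hbu => hab (hbu.symm)⟩
          · exact ⟨a, ha, h⟩
        have hvT : v ∈ T := hTfin.mem_toFinset.mp hv
        have hnot : ¬ S ⊆ closedBall u (r / 3) := by
          intro hsub
          have := hsub (hTS hvT)
          have hd := hTsep hvT huT hvu
          rw [mem_closedBall] at this
          linarith
        exact aux_hausdorff_ge hconn (hTS huT) (by positivity) hnot
      have hdisj : (hTfin.toFinset : Set E).PairwiseDisjoint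
          fun u => S ∩ closedBall u (r / 3) := by
        intro a ha b hb hab
        have haT : a ∈ T := hTfin.mem_toFinset.mp ha
        have hbT : b ∈ T := hTfin.mem_toFinset.mp hb
        have hd := hTsep haT hbT hab
        have : Disjoint (closedBall a (r / 3)) (closedBall b (r / 3)) :=
          closedBall_disjoint_closedBall (by linarith)
        exact (this.mono inter_subset_right inter_subset_right)
      have hsum : (N : ℝ≥0∞) * ENNReal.ofReal (r / 3) ≤ μH[1] S := by
        calc (N : ℝ≥0∞) * ENNReal.ofReal (r / 3)
            = ∑ _u ∈ hTfin.toFinset, ENNReal.ofReal (r / 3) := by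
              rw [Finset.sum_const, nsmul_eq_mul]
          _ ≤ ∑ u ∈ hTfin.toFinset, μH[1] (S ∩ closedBall u (r / 3)) :=
              Finset.sum_le_sum hkey
          _ = μH[1] (⋃ u ∈ hTfin.toFinset, S ∩ closedBall u (r / 3)) := by
              refine (measure_biUnion_finset hdisj fun u _ => ?_).symm
              exact (hcomp.isClosed.inter isClosed_closedBall).measurableSet
          _ ≤ μH[1] S := measure_mono (by simp [iUnion_subset_iff])
      have hmul : ENNReal.ofReal (r / 3) * ENNReal.ofReal (3 / r) = 1 := by
        rw [← ENNReal.ofReal_mul (by positivity)]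
        rw [show r / 3 * (3 / r) = 1 by field_simp]
        simp
      calc (N : ℝ≥0∞) = (N : ℝ≥0∞) * ENNReal.ofReal (r / 3) * ENNReal.ofReal (3 / r) := by
            rw [mul_assoc, hmul, mul_one]
        _ ≤ μH[1] S * ENNReal.ofReal (3 / r) :=
            mul_le_mul_left hsum _
        _ ≤ 1 + ENNReal.ofReal (3 / r) * μH[1] S := by
            rw [mul_comm]; exact le_add_self
  -- combine
  have hVle : V ≤ ENNReal.ofReal (V.toReal + 1) := by
    rw [ENNReal.ofReal_add ENNReal.toReal_nonneg zero_le_one, ENNReal.ofReal_toReal hVfin.ne]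
    exact le_self_add
  have hc1 : (1 : ℝ≥0∞) ≤ ENNReal.ofReal (max 1 (3 / r)) := by
    rw [show (1 : ℝ≥0∞) = ENNReal.ofReal 1 by simp]
    exact ENNReal.ofReal_le_ofReal (le_max_left _ _)
  have hc2 : ENNReal.ofReal (3 / r) ≤ ENNReal.ofReal (max 1 (3 / r)) :=
    ENNReal.ofReal_le_ofReal (le_max_right _ _)
  calc volume {x : E | Metric.infDist x S ≤ r}
      ≤ (N : ℝ≥0∞) * V := hvol
    _ ≤ (1 + ENNReal.ofReal (3 / r) * μH[1] S) * V := mul_le_mul_left hcard _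
    _ ≤ (ENNReal.ofReal (max 1 (3 / r)) * (1 + μH[1] S)) * ENNReal.ofReal (V.toReal + 1) := by
        refine mul_le_mul' ?_ hVle
        rw [mul_add, mul_one]
        exact add_le_add hc1 (mul_le_mul' hc2 le_rfl)
    _ = ENNReal.ofReal ((V.toReal + 1) * max 1 (3 / r)) * (1 + μH[1] S) := by
        rw [ENNReal.ofReal_mul (by positivity)]
        ring
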